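/- arXiv:2103.01433 — 6 statements merged into one kernel-verified Lean document; each statement's English description precedes it below -/
import Mathlib

section
/- Let 0 < p̂ < q̂ and σ² ≥ 0. Define f_U(x) := (e^{−(x−σ²)/q̂} − e^{−(x−σ²)/p̂})/(q̂ − p̂) and f_V(x) := (1/q̂) e^{−(x−σ²)/q̂} for x ≥ σ² (both 0 for x < σ²), and set χ := p̂/q̂ ∈ (0,1). Then (1/2) ∫_{σ²}^∞ |f_U(x) − f_V(x)| dx = χ^{1/(1−χ)}. Moreover, the set {x ≥ σ² : f_U(x) ≥ f_V(x)} equals the interval [σ² + (q̂p̂/(q̂−p̂)) ln(q̂/p̂), ∞). -/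
open MeasureTheory Real Set Filter Topology


open MeasureTheory Real Set Filter Topology

lemma expShift_eq (s r : ℝ) (hr : 0 < r) :
    (fun x : ℝ => Real.exp (-(x - s) / r)) =
      (fun x : ℝ => Real.exp (s / r) * Real.exp (-(1/r) * x)) := by
  funext x
  rw [← Real.exp_add]
  congr 1
  field_simp
  ring

lemma expShift_integrableOn (s b r : ℝ) (hr : 0 < r) :
    IntegrableOn (fun x : ℝ => Real.exp (-(x - s) / r)) (Set.Ioi b) := by
  rw [expShift_eq s r hr]
  exact (exp_neg_integrableOn_Ioi b (show (0:ℝ) < 1/r by positivity)).const_mul _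

lemma expShift_integral (s b r : ℝ) (hr : 0 < r) :
    (∫ x in Set.Ioi b, Real.exp (-(x - s) / r)) = r * Real.exp (-(b - s) / r) := by
  have hderiv : ∀ x ∈ Set.Ici b,
      HasDerivAt (fun x : ℝ => -r * Real.exp (-(x - s) / r)) (Real.exp (-(x - s) / r)) x := by
    intro x _
    have h1 : HasDerivAt (fun x : ℝ => -(x - s) / r) (-1 / r) x := by
      simpa using (((hasDerivAt_id x).sub_const s).neg.div_const r)
    have := (h1.exp.const_mul (-r))
    convert this using 1
    · rfl
    · rfl
    field_simp
  have htend : Tendsto (fun x : ℝ => -r * Real.exp (-(x - s) / r)) atTop (𝓝 0) := by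
    have h0 : Tendsto (fun x : ℝ => -r * Real.exp (-(x - s) / r)) atTop (𝓝 (-r * 0)) := by
      refine Tendsto.const_mul _ ?_
      apply Real.tendsto_exp_atBot.comp
      have h2 : Tendsto (fun x : ℝ => x - s) atTop atTop := tendsto_atTop_add_const_right _ _ tendsto_id
      exact (h2.const_mul_atTop_of_neg (show (-(1:ℝ))/r < 0 by rw [neg_div]; exact neg_neg_iff_pos.2 (div_pos one_pos hr))).congr (by intro x; ring)
    simpa using h0
  have := integral_Ioi_of_hasDerivAt_of_tendsto' hderiv (expShift_integrableOn s b r hr) htend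
  rw [this]; ring

open MeasureTheory Real Set Filter Topology

lemma sign_key (p q L t : ℝ) (hp : 0 < p) (hpq : p < q) :
    (-t/p ≤ -L + -t/q ↔ q*p*L ≤ t*(q-p)) := by
  have hq : 0 < q := hp.trans hpq
  have hd : -L + -t/q - (-t/p) = (t*(q-p) - q*p*L)/(p*q) := by
    field_simp; ring
  rw [← sub_nonneg, hd, le_div_iff₀ (mul_pos hp hq)]
  constructor <;> intro h <;> linarith

lemma sign_key' (p q L t : ℝ) (hp : 0 < p) (hpq : p < q) :
    (-L + -t/q ≤ -t/p ↔ t*(q-p) ≤ q*p*L) := by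
  have hq : 0 < q := hp.trans hpq
  have hd : -t/p - (-L + -t/q) = (q*p*L - t*(q-p))/(p*q) := by
    field_simp; ring
  rw [← sub_nonneg, hd, le_div_iff₀ (mul_pos hp hq)]
  constructor <;> intro h <;> linarith

lemma t0_iff (p q σ2 x : ℝ) (hp : 0 < p) (hpq : p < q) :
    (q*p*Real.log (q/p) ≤ (x - σ2)*(q-p)) ↔ σ2 + q*p/(q-p) * Real.log (q/p) ≤ x := by
  have hqp : 0 < q - p := sub_pos.2 hpq
  rw [← le_sub_iff_add_le', div_mul_eq_mul_div, div_le_iff₀ hqp]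

lemma exp_shift_eq_log (p q σ2 x : ℝ) (hp : 0 < p) (hpq : p < q) :
    p/q * Real.exp (-(x-σ2)/q) = Real.exp (- Real.log (q/p) + -(x-σ2)/q) := by
  have hq : 0 < q := hp.trans hpq
  have hpq0 : 0 < p/q := div_pos hp hq
  have hL : Real.log (p/q) = - Real.log (q/p) := by
    rw [← Real.log_inv]; congr 1; rw [inv_div]
  rw [← hL, Real.exp_add, Real.exp_log hpq0]

lemma sign_core (p q σ2 : ℝ) (hp : 0 < p) (hpq : p < q) (x : ℝ) :
    Real.exp (-(x-σ2)/p) ≤ p/q * Real.exp (-(x-σ2)/q) ↔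
      σ2 + q*p/(q-p) * Real.log (q/p) ≤ x := by
  rw [exp_shift_eq_log p q σ2 x hp hpq, Real.exp_le_exp, ← t0_iff p q σ2 x hp hpq]
  exact sign_key p q (Real.log (q/p)) (x - σ2) hp hpq

lemma sign_core' (p q σ2 : ℝ) (hp : 0 < p) (hpq : p < q) (x : ℝ) :
    p/q * Real.exp (-(x-σ2)/q) ≤ Real.exp (-(x-σ2)/p) ↔
      x ≤ σ2 + q*p/(q-p) * Real.log (q/p) := by
  have hqp : 0 < q - p := sub_pos.2 hpq
  rw [exp_shift_eq_log p q σ2 x hp hpq, Real.exp_le_exp]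
  rw [sign_key' p q (Real.log (q/p)) (x - σ2) hp hpq]
  rw [← sub_le_iff_le_add', div_mul_eq_mul_div, le_div_iff₀ hqp]


theorem stmt_1 (p q σ2 : ℝ) (hp : 0 < p) (hpq : p < q) (hσ : 0 ≤ σ2)
    (fU fV : ℝ → ℝ)
    (hfU : ∀ x, fU x =
      if σ2 ≤ x then (Real.exp (-(x - σ2) / q) - Real.exp (-(x - σ2) / p)) / (q - p) else 0)
    (hfV : ∀ x, fV x = if σ2 ≤ x then (1 / q) * Real.exp (-(x - σ2) / q) else 0)
    (χ : ℝ) (hχ : χ = p / q) :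
    (1 / 2) * (∫ x in Set.Ici σ2, |fU x - fV x|) = χ ^ (1 / (1 - χ)) ∧
    {x : ℝ | σ2 ≤ x ∧ fV x ≤ fU x} =
      Set.Ici (σ2 + q * p / (q - p) * Real.log (q / p)) := by
  have hq : 0 < q := hp.trans hpq
  have hqp : 0 < q - p := sub_pos.2 hpq
  have hL : 0 < Real.log (q / p) := Real.log_pos (by rw [lt_div_iff₀ hp]; linarith)
  set t0 : ℝ := q * p / (q - p) * Real.log (q / p) with ht0
  have ht0pos : 0 < t0 := mul_pos (div_pos (mul_pos hq hp) hqp) hL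
  set x0 : ℝ := σ2 + t0 with hx0
  have hσx0 : σ2 ≤ x0 := by simp [hx0]; linarith
  set g : ℝ → ℝ :=
    fun x => (1/(q-p)) * (p/q * Real.exp (-(x - σ2)/q) - Real.exp (-(x - σ2)/p)) with hg
  have hg_eq : ∀ x, σ2 ≤ x → fU x - fV x = g x := by
    intro x hx
    rw [hfU, hfV, if_pos hx, if_pos hx, hg]
    field_simp
    ring
  -- sign facts
  have hsign_pos : ∀ x, x0 ≤ x → 0 ≤ g x := by
    intro x hx
    have := (sign_core p q σ2 hp hpq x).2 hx
    have : Real.exp (-(x - σ2)/p) ≤ p/q * Real.exp (-(x - σ2)/q) := this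
    rw [hg]
    have h1 : (0:ℝ) < 1/(q-p) := by positivity
    nlinarith
  have hsign_neg : ∀ x, x ≤ x0 → g x ≤ 0 := by
    intro x hx
    have := (sign_core' p q σ2 hp hpq x).2 hx
    rw [hg]
    have h1 : (0:ℝ) < 1/(q-p) := by positivity
    nlinarith
  -- set equality
  have hset : {x : ℝ | σ2 ≤ x ∧ fV x ≤ fU x} = Set.Ici x0 := by
    ext x
    simp only [mem_setOf_eq, mem_Ici]
    constructor
    · rintro ⟨hx, hle⟩
      have h0 : 0 ≤ g x := by rw [← hg_eq x hx]; linarith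
      by_contra hcon
      push_neg at hcon
      have := (sign_core' p q σ2 hp hpq x).2 hcon.le
      have hlt : ¬ (σ2 + q*p/(q-p) * Real.log (q/p) ≤ x) := not_le.2 hcon
      have := (not_iff_not.2 (sign_core p q σ2 hp hpq x)).2 hlt
      push_neg at this
      have h2 : g x < 0 := by
        rw [hg]
        have h1 : (0:ℝ) < 1/(q-p) := by positivity
        nlinarith
      linarith
    · intro hx
      have hσx : σ2 ≤ x := le_trans hσx0 hx
      refine ⟨hσx, ?_⟩
      have := hsign_pos x hx
      rw [← hg_eq x hσx] at this
      linarith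
  refine ⟨?_, hset⟩
  -- integral computation
  have hInt : ∀ b : ℝ, IntegrableOn g (Set.Ioi b) := by
    intro b
    exact ((((expShift_integrableOn σ2 b q hq).const_mul (p/q)).sub
      (expShift_integrableOn σ2 b p hp)).const_mul (1/(q-p)))
  have hIval : ∀ b : ℝ, (∫ x in Set.Ioi b, g x) =
      (1/(q-p)) * (p/q * (q * Real.exp (-(b - σ2)/q)) - p * Real.exp (-(b - σ2)/p)) := by
    intro b
    rw [hg]
    simp only []
    rw [MeasureTheory.integral_const_mul]
    rw [MeasureTheory.integral_sub ((expShift_integrableOn σ2 b q hq).const_mul (p/q))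
      (expShift_integrableOn σ2 b p hp)]
    rw [MeasureTheory.integral_const_mul, expShift_integral σ2 b q hq,
      expShift_integral σ2 b p hp]
  -- rewrite |fU - fV| as |g| on Ici σ2
  have h1 : (∫ x in Set.Ici σ2, |fU x - fV x|) = ∫ x in Set.Ici σ2, |g x| := by
    apply MeasureTheory.setIntegral_congr_fun measurableSet_Ici
    intro x hx
    show |fU x - fV x| = |g x|
    rw [hg_eq x hx]
  rw [h1, MeasureTheory.integral_Ici_eq_integral_Ioi]
  -- split the integral
  have hunion : Set.Ioc σ2 x0 ∪ Set.Ioi x0 = Set.Ioi σ2 := Set.Ioc_union_Ioi_eq_Ioi hσx0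
  have hdisj : Disjoint (Set.Ioc σ2 x0) (Set.Ioi x0) := Set.Ioc_disjoint_Ioi le_rfl
  have habs_int : IntegrableOn (fun x => |g x|) (Set.Ioi σ2) := (hInt σ2).abs
  have hsplit : (∫ x in Set.Ioi σ2, |g x|) =
      (∫ x in Set.Ioc σ2 x0, |g x|) + ∫ x in Set.Ioi x0, |g x| := by
    rw [← hunion] at habs_int ⊢
    exact MeasureTheory.setIntegral_union hdisj measurableSet_Ioi
      (habs_int.mono_set subset_union_left) (habs_int.mono_set subset_union_right)
  have hgsplit : (∫ x in Set.Ioi σ2, g x) =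
      (∫ x in Set.Ioc σ2 x0, g x) + ∫ x in Set.Ioi x0, g x := by
    have hgi := hInt σ2
    rw [← hunion] at hgi ⊢
    exact MeasureTheory.setIntegral_union hdisj measurableSet_Ioi
      (hgi.mono_set subset_union_left) (hgi.mono_set subset_union_right)
  have habs1 : (∫ x in Set.Ioc σ2 x0, |g x|) = - ∫ x in Set.Ioc σ2 x0, g x := by
    rw [← MeasureTheory.integral_neg]
    apply MeasureTheory.setIntegral_congr_fun measurableSet_Ioc
    intro x hx
    show |g x| = -(g x)
    exact abs_of_nonpos (hsign_neg x hx.2)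
  have habs2 : (∫ x in Set.Ioi x0, |g x|) = ∫ x in Set.Ioi x0, g x := by
    apply MeasureTheory.setIntegral_congr_fun measurableSet_Ioi
    intro x hx
    show |g x| = g x
    exact abs_of_nonneg (hsign_pos x (le_of_lt hx))
  -- values
  have hIa : (∫ x in Set.Ioi σ2, g x) = 0 := by
    rw [hIval σ2]
    simp only [sub_self, zero_div, neg_zero, Real.exp_zero, mul_one]
    rw [div_mul_cancel₀ p hq.ne']
    ring
  have hx0σ : x0 - σ2 = t0 := by rw [hx0]; ring
  set Eq : ℝ := Real.exp (-t0/q) with hEq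
  set Ep : ℝ := Real.exp (-t0/p) with hEp
  have hIb : (∫ x in Set.Ioi x0, g x) = (1/(q-p)) * (p/q * (q * Eq) - p * Ep) := by
    rw [hIval x0, hx0σ]
  -- final algebra
  have hχ0 : 0 < p/q := div_pos hp hq
  have hEqval : Eq = (p/q) ^ (p/(q-p) : ℝ) := by
    rw [hEq, Real.rpow_def_of_pos hχ0]
    congr 1
    have hLrev : Real.log (p/q) = - Real.log (q/p) := by
      rw [← Real.log_inv]; congr 1; rw [inv_div]
    rw [hLrev, ht0]
    field_simp
  have hEpval : Ep = (p/q) ^ (q/(q-p) : ℝ) := by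
    rw [hEp, Real.rpow_def_of_pos hχ0]
    congr 1
    have hLrev : Real.log (p/q) = - Real.log (q/p) := by
      rw [← Real.log_inv]; congr 1; rw [inv_div]
    rw [hLrev, ht0]
    field_simp
  have hexpsum : (q/(q-p) : ℝ) = p/(q-p) + 1 := by field_simp; ring
  have hEpEq : Ep = Eq * (p/q) := by
    rw [hEpval, hEqval, hexpsum, Real.rpow_add hχ0, Real.rpow_one]
  have hRHS : χ ^ (1 / (1 - χ)) = Ep := by
    rw [hχ, hEpval]
    congr 1
    rw [show (1:ℝ) - p/q = (q-p)/q by field_simp, one_div_div]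
  rw [hsplit, habs1, habs2, hRHS]
  have hIoc : (∫ x in Set.Ioc σ2 x0, g x) = - ∫ x in Set.Ioi x0, g x := by
    linarith [hgsplit, hIa]
  rw [hIoc, hIb, hEpEq]
  field_simp
  ring
end

section
/- Let K ≥ 1 and for each k ∈ {1,…,K} let 0 < p̂_k < q̂_k and σ_k² ≥ 0. Define f_{U_k}(x) := (e^{−(x−σ_k²)/q̂_k} − e^{−(x−σ_k²)/p̂_k})/(q̂_k − p̂_k) and f_{V_k}(x) := (1/q̂_k) e^{−(x−σ_k²)/q̂_k} for x ≥ σ_k² (0 otherwise), and set χ_k := p̂_k/q̂_k. Then (1/2) ∫_{ℝ^K} |∏_{k=1}^K f_{U_k}(x_k) − ∏_{k=1}^K f_{V_k}(x_k)| dx ≤ Σ_{k=1}^K χ_k^{1/(1−χ_k)}. -/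
open MeasureTheory Real Set

lemma intOn_exp' {b : ℝ} (hb : 0 < b) (c : ℝ) :
    IntegrableOn (fun t : ℝ => Real.exp (-(t / b))) (Ioi c) := by
  have h := exp_neg_integrableOn_Ioi c (inv_pos.mpr hb)
  refine h.congr_fun (fun x _ => ?_) measurableSet_Ioi
  dsimp only
  rw [div_eq_mul_inv, neg_mul, mul_comm]

lemma integral_exp_Ioi' {b : ℝ} (hb : 0 < b) (c : ℝ) :
    ∫ t in Ioi c, Real.exp (-(t / b)) = b * Real.exp (-(c / b)) := by
  have hderiv : ∀ x ∈ Ici c,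
      HasDerivAt (fun t : ℝ => -b * Real.exp (-(t / b))) (Real.exp (-(x / b))) x := by
    intro x _
    have h := (((hasDerivAt_id x).div_const b).neg.exp).const_mul (-b)
    exact h.congr_deriv (by have := hb.ne'; simp only [Pi.neg_apply, id]; field_simp)
  have h1 : Filter.Tendsto (fun t : ℝ => -(t / b)) Filter.atTop Filter.atBot := by
    apply Filter.tendsto_neg_atTop_atBot.comp
    exact Filter.Tendsto.atTop_div_const hb Filter.tendsto_id
  have htend : Filter.Tendsto (fun t : ℝ => -b * Real.exp (-(t / b)))
      Filter.atTop (nhds 0) := by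
    have := (Real.tendsto_exp_atBot.comp h1).const_mul (-b)
    simpa using this
  have := integral_Ioi_of_hasDerivAt_of_tendsto' hderiv (intOn_exp' hb c) htend
  rw [this]; ring

lemma ite_eq_indicator' (g : ℝ → ℝ) :
    (fun t : ℝ => if 0 ≤ t then g t else 0) = Set.indicator (Ici 0) g := by
  funext t; simp [Set.indicator_apply, Set.mem_Ici]

lemma shift_integrable' {g : ℝ → ℝ} (s : ℝ) (hg : IntegrableOn g (Ioi 0)) :
    Integrable (fun x : ℝ => if s ≤ x then g (x - s) else 0) := by
  have h1 : (fun x : ℝ => if s ≤ x then g (x - s) else 0)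
      = fun x => (fun t => if 0 ≤ t then g t else 0) (x - s) := by
    funext x; simp [sub_nonneg]
  have h2 : Integrable (fun t : ℝ => if 0 ≤ t then g t else 0) := by
    rw [ite_eq_indicator', integrable_indicator_iff measurableSet_Ici]
    exact (integrableOn_Ici_iff_integrableOn_Ioi).mpr hg
  rw [h1]
  exact h2.comp_sub_right s

lemma shift_integral' (g : ℝ → ℝ) (s : ℝ) :
    ∫ x : ℝ, (if s ≤ x then g (x - s) else 0) = ∫ t in Ioi (0:ℝ), g t := by
  have h1 : (fun x : ℝ => if s ≤ x then g (x - s) else 0)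
      = fun x => (fun t => if 0 ≤ t then g t else 0) (x - s) := by
    funext x; simp [sub_nonneg]
  rw [h1, integral_sub_right_eq_self (fun t => if 0 ≤ t then g t else 0) s,
    ite_eq_indicator', integral_indicator measurableSet_Ici,
    integral_Ici_eq_integral_Ioi]

lemma intOn_U' {p q : ℝ} (hp : 0 < p) (hpq : p < q) (c : ℝ) :
    IntegrableOn (fun t : ℝ => (Real.exp (-(t/q)) - Real.exp (-(t/p)))/(q-p)) (Ioi c) := by
  have hq : 0 < q := hp.trans hpq
  exact ((intOn_exp' hq c).sub (intOn_exp' hp c)).div_const _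

lemma intOn_V' {q : ℝ} (hq : 0 < q) (c : ℝ) :
    IntegrableOn (fun t : ℝ => (1/q) * Real.exp (-(t/q))) (Ioi c) :=
  (intOn_exp' hq c).const_mul _

lemma intOn_D' {p q : ℝ} (hp : 0 < p) (hpq : p < q) (c : ℝ) :
    IntegrableOn (fun t : ℝ =>
      (Real.exp (-(t/q)) - Real.exp (-(t/p)))/(q-p) - (1/q) * Real.exp (-(t/q))) (Ioi c) :=
  (intOn_U' hp hpq c).sub (intOn_V' (hp.trans hpq) c)

lemma integral_U' {p q : ℝ} (hp : 0 < p) (hpq : p < q) (c : ℝ) :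
    ∫ t in Ioi c, (Real.exp (-(t/q)) - Real.exp (-(t/p)))/(q-p)
      = (q * Real.exp (-(c/q)) - p * Real.exp (-(c/p)))/(q-p) := by
  have hq : 0 < q := hp.trans hpq
  rw [integral_div, integral_sub (intOn_exp' hq c) (intOn_exp' hp c),
    integral_exp_Ioi' hq, integral_exp_Ioi' hp]

lemma integral_V' {q : ℝ} (hq : 0 < q) (c : ℝ) :
    ∫ t in Ioi c, (1/q) * Real.exp (-(t/q)) = Real.exp (-(c/q)) := by
  rw [integral_const_mul, integral_exp_Ioi' hq]
  field_simp

lemma integral_D' {p q : ℝ} (hp : 0 < p) (hpq : p < q) (c : ℝ) :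
    ∫ t in Ioi c, ((Real.exp (-(t/q)) - Real.exp (-(t/p)))/(q-p) - (1/q) * Real.exp (-(t/q)))
      = (q * Real.exp (-(c/q)) - p * Real.exp (-(c/p)))/(q-p) - Real.exp (-(c/q)) := by
  have hq : 0 < q := hp.trans hpq
  rw [integral_sub (intOn_U' hp hpq c) (intOn_V' hq c), integral_U' hp hpq c,
    integral_V' hq c]

lemma abs_integral_D {p q : ℝ} (hp : 0 < p) (hpq : p < q) :
    ∫ t in Ioi (0:ℝ),
        |(Real.exp (-(t/q)) - Real.exp (-(t/p)))/(q-p) - (1/q) * Real.exp (-(t/q))|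
      = 2 * ((p/q) ^ (1/(1 - p/q)) : ℝ) := by
  have hq : 0 < q := hp.trans hpq
  have hqp : 0 < q - p := sub_pos.mpr hpq
  obtain ⟨L, hLdef⟩ : ∃ L : ℝ, L = Real.log q - Real.log p := ⟨_, rfl⟩
  have hLpos : 0 < L := by
    rw [hLdef, ← Real.log_div hq.ne' hp.ne']
    exact Real.log_pos ((one_lt_div hp).mpr hpq)
  obtain ⟨T, hT⟩ : ∃ T : ℝ, T = p * q * L / (q - p) := ⟨_, rfl⟩
  have hT0 : 0 < T := by rw [hT]; positivity
  set D : ℝ → ℝ := fun t =>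
    (Real.exp (-(t/q)) - Real.exp (-(t/p)))/(q-p) - (1/q) * Real.exp (-(t/q)) with hD
  have hsign : ∀ t : ℝ, D t = (p * Real.exp (-(t/q)) - q * Real.exp (-(t/p))) / (q*(q-p)) := by
    intro t
    rw [hD]
    field_simp
    ring
  have hcomp : ∀ t : ℝ, p * Real.exp (-(t/q)) = Real.exp (Real.log p + -(t/q)) ∧
      q * Real.exp (-(t/p)) = Real.exp (Real.log q + -(t/p)) := by
    intro t
    constructor
    · rw [Real.exp_add, Real.exp_log hp]
    · rw [Real.exp_add, Real.exp_log hq]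
  have h3 : T*((q-p)/(p*q)) = L := by
    rw [hT]
    field_simp
    try ring
  have h2 : ∀ t : ℝ, t/p - t/q = t*((q-p)/(p*q)) := by
    intro t; field_simp
  have hdiffle : ∀ t : ℝ, t ≤ T → Real.log p + -(t/q) ≤ Real.log q + -(t/p) := by
    intro t ht
    have h4 : t*((q-p)/(p*q)) ≤ T*((q-p)/(p*q)) :=
      mul_le_mul_of_nonneg_right ht (by positivity)
    have h5 : t/p - t/q ≤ L := by rw [h2]; linarith
    rw [hLdef] at h5
    linarith
  have hdiffge : ∀ t : ℝ, T ≤ t → Real.log q + -(t/p) ≤ Real.log p + -(t/q) := by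
    intro t ht
    have h4 : T*((q-p)/(p*q)) ≤ t*((q-p)/(p*q)) :=
      mul_le_mul_of_nonneg_right ht (by positivity)
    have h5 : L ≤ t/p - t/q := by rw [h2]; linarith
    rw [hLdef] at h5
    linarith
  have hDneg : ∀ t : ℝ, t ≤ T → D t ≤ 0 := by
    intro t ht
    rw [hsign t]
    apply div_nonpos_of_nonpos_of_nonneg _ (by positivity)
    have := Real.exp_le_exp.mpr (hdiffle t ht)
    rw [← (hcomp t).1, ← (hcomp t).2] at this
    linarith
  have hDpos : ∀ t : ℝ, T ≤ t → 0 ≤ D t := by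
    intro t ht
    rw [hsign t]
    apply div_nonneg _ (by positivity)
    have := Real.exp_le_exp.mpr (hdiffge t ht)
    rw [← (hcomp t).1, ← (hcomp t).2] at this
    linarith
  have hint0 : IntegrableOn D (Ioi 0) := intOn_D' hp hpq 0
  have hintT : IntegrableOn D (Ioi T) := intOn_D' hp hpq T
  have hintOc : IntegrableOn D (Ioc 0 T) := hint0.mono_set Ioc_subset_Ioi_self
  have hunion : Ioc (0:ℝ) T ∪ Ioi T = Ioi 0 := Ioc_union_Ioi_eq_Ioi hT0.le
  have hsplitabs : ∫ t in Ioi (0:ℝ), |D t|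
      = (∫ t in Ioc (0:ℝ) T, |D t|) + ∫ t in Ioi T, |D t| := by
    rw [← hunion]
    exact setIntegral_union Ioc_disjoint_Ioi_same measurableSet_Ioi hintOc.abs hintT.abs
  have hsplitD : ∫ t in Ioi (0:ℝ), D t
      = (∫ t in Ioc (0:ℝ) T, D t) + ∫ t in Ioi T, D t := by
    rw [← hunion]
    exact setIntegral_union Ioc_disjoint_Ioi_same measurableSet_Ioi hintOc hintT
  have habs1 : ∫ t in Ioc (0:ℝ) T, |D t| = - ∫ t in Ioc (0:ℝ) T, D t := by
    rw [← integral_neg]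
    exact setIntegral_congr_fun measurableSet_Ioc (fun t ht => abs_of_nonpos (hDneg t ht.2))
  have habs2 : ∫ t in Ioi T, |D t| = ∫ t in Ioi T, D t :=
    setIntegral_congr_fun measurableSet_Ioi (fun t ht => abs_of_nonneg (hDpos t (le_of_lt ht)))
  have hJ0 : ∫ t in Ioi (0:ℝ), D t = 0 := by
    rw [hD, integral_D' hp hpq 0]
    simp
    field_simp
    norm_num
  have hJT : ∫ t in Ioi T, D t
      = (q * Real.exp (-(T/q)) - p * Real.exp (-(T/p)))/(q-p) - Real.exp (-(T/q)) := by
    rw [hD, integral_D' hp hpq T]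
  have key2 : p * Real.exp (-(T/q)) = q * Real.exp (-(T/p)) := by
    rw [(hcomp T).1, (hcomp T).2]
    congr 1
    rw [hT, hLdef]
    field_simp
    ring
  have hJTval : ∫ t in Ioi T, D t = Real.exp (-(T/p)) := by
    rw [hJT]
    field_simp
    linarith [key2]
  have hrp : ((p/q : ℝ) ^ (1/(1 - p/q)) : ℝ) = Real.exp (-(T/p)) := by
    rw [Real.rpow_def_of_pos (div_pos hp hq)]
    congr 1
    have h1q : (1 : ℝ) - p/q ≠ 0 := by
      have : p/q < 1 := (div_lt_one hq).mpr hpq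
      linarith
    rw [Real.log_div hp.ne' hq.ne', hT, hLdef]
    field_simp
    ring
  have hfin : ∫ t in Ioi (0:ℝ), |D t| = 2 * Real.exp (-(T/p)) := by
    rw [hsplitabs, habs1, habs2]
    have h6 : ∫ t in Ioc (0:ℝ) T, D t = - ∫ t in Ioi T, D t := by
      have := hsplitD
      rw [hJ0] at this
      linarith
    rw [h6, hJTval]
    ring
  rw [show (∫ t in Ioi (0:ℝ),
      |(Real.exp (-(t/q)) - Real.exp (-(t/p)))/(q-p) - (1/q) * Real.exp (-(t/q))|)
      = ∫ t in Ioi (0:ℝ), |D t| from rfl, hfin, hrp]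

lemma tele_bound {ι : Type*} [LinearOrder ι] (A B : ι → ℝ)
    (hA : ∀ i, 0 ≤ A i) (hB : ∀ i, 0 ≤ B i) (s : Finset ι) :
    |(∏ i ∈ s, A i) - ∏ i ∈ s, B i|
      ≤ ∑ i ∈ s, |A i - B i| * ∏ j ∈ s.erase i, (if j < i then A j else B j) := by
  induction s using Finset.induction_on_max with
  | empty => simp
  | insert a s hmax ih =>
    have ha : a ∉ s := fun h => lt_irrefl a (hmax a h)
    rw [Finset.prod_insert ha, Finset.prod_insert ha, Finset.sum_insert ha]
    have hP : (0:ℝ) ≤ ∏ i ∈ s, A i := Finset.prod_nonneg (fun i _ => hA i)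
    have hQ : (0:ℝ) ≤ ∏ i ∈ s, B i := Finset.prod_nonneg (fun i _ => hB i)
    have step1 : |A a * ∏ i ∈ s, A i - B a * ∏ i ∈ s, B i|
        ≤ |A a - B a| * ∏ i ∈ s, A i + B a * |(∏ i ∈ s, A i) - ∏ i ∈ s, B i| := by
      have : A a * ∏ i ∈ s, A i - B a * ∏ i ∈ s, B i
          = (A a - B a) * ∏ i ∈ s, A i + B a * ((∏ i ∈ s, A i) - ∏ i ∈ s, B i) := by ring
      rw [this]
      refine (abs_add_le _ _).trans ?_
      rw [abs_mul, abs_mul, abs_of_nonneg hP, abs_of_nonneg (hB a)]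
    refine step1.trans ?_
    have e1 : |A a - B a| * ∏ i ∈ s, A i
        = |A a - B a| * ∏ j ∈ (insert a s).erase a, (if j < a then A j else B j) := by
      rw [Finset.erase_insert ha]
      congr 1
      exact Finset.prod_congr rfl (fun j hj => (if_pos (hmax j hj)).symm)
    have e2 : B a * |(∏ i ∈ s, A i) - ∏ i ∈ s, B i|
        ≤ ∑ i ∈ s, |A i - B i| * ∏ j ∈ (insert a s).erase i, (if j < i then A j else B j) := by
      refine (mul_le_mul_of_nonneg_left ih (hB a)).trans ?_
      rw [Finset.mul_sum]
      refine Finset.sum_le_sum (fun i hi => ?_)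
      have hai : a ≠ i := fun h => (lt_irrefl a (h ▸ hmax i hi))
      have herase : (insert a s).erase i = insert a (s.erase i) := by
        rw [Finset.erase_insert_of_ne hai]
      rw [herase, Finset.prod_insert (fun h => ha (Finset.mem_of_mem_erase h)),
        if_neg (not_lt.mpr (hmax i hi).le)]
      exact le_of_eq (by ring)
    calc |A a - B a| * ∏ i ∈ s, A i + B a * |(∏ i ∈ s, A i) - ∏ i ∈ s, B i|
        ≤ |A a - B a| * ∏ j ∈ (insert a s).erase a, (if j < a then A j else B j)
          + ∑ i ∈ s, |A i - B i| * ∏ j ∈ (insert a s).erase i, (if j < i then A j else B j) := by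
          rw [← e1]; exact add_le_add le_rfl e2
      _ = _ := rfl

theorem stmt_3 (K : ℕ) (hK : 1 ≤ K) (p q σ2 : Fin K → ℝ)
    (hp : ∀ k, 0 < p k) (hpq : ∀ k, p k < q k) (hσ : ∀ k, 0 ≤ σ2 k)
    (fU fV : Fin K → ℝ → ℝ)
    (hfU : ∀ k x, fU k x =
      if σ2 k ≤ x then
        (Real.exp (-(x - σ2 k) / q k) - Real.exp (-(x - σ2 k) / p k)) / (q k - p k)
      else 0)
    (hfV : ∀ k x, fV k x =
      if σ2 k ≤ x then (1 / q k) * Real.exp (-(x - σ2 k) / q k) else 0)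
    (χ : Fin K → ℝ) (hχ : ∀ k, χ k = p k / q k) :
    (1 / 2) * (∫ x : Fin K → ℝ, |(∏ k, fU k (x k)) - ∏ k, fV k (x k)|) ≤
      ∑ k, χ k ^ (1 / (1 - χ k)) := by
  have hq : ∀ k, 0 < q k := fun k => (hp k).trans (hpq k)
  -- rewritten forms of fU and fV
  have eU : ∀ k, (fun x : ℝ => fU k x)
      = fun x : ℝ => if σ2 k ≤ x then
          (Real.exp (-((x - σ2 k)/q k)) - Real.exp (-((x - σ2 k)/p k)))/(q k - p k)
        else 0 := by
    intro k; funext x; rw [hfU k x]; simp only [neg_div]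
  have eV : ∀ k, (fun x : ℝ => fV k x)
      = fun x : ℝ => if σ2 k ≤ x then (1/q k) * Real.exp (-((x - σ2 k)/q k)) else 0 := by
    intro k; funext x; rw [hfV k x]; simp only [neg_div]
  have eD : ∀ k, (fun x : ℝ => |fU k x - fV k x|)
      = fun x : ℝ => if σ2 k ≤ x then
          |(Real.exp (-((x - σ2 k)/q k)) - Real.exp (-((x - σ2 k)/p k)))/(q k - p k)
            - (1/q k) * Real.exp (-((x - σ2 k)/q k))|
        else 0 := by
    intro k; funext x; rw [hfU k x, hfV k x]
    split_ifs with h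
    · simp only [neg_div]
    · simp
  -- integrability
  have hUint : ∀ k, Integrable (fU k) := by
    intro k
    have h := shift_integrable' (σ2 k) (intOn_U' (hp k) (hpq k) 0)
    have h2 : Integrable (fun x : ℝ => if σ2 k ≤ x then
        (Real.exp (-((x - σ2 k)/q k)) - Real.exp (-((x - σ2 k)/p k)))/(q k - p k) else 0) := by
      simpa using h
    rw [← eU k] at h2
    exact h2
  have hVint : ∀ k, Integrable (fV k) := by
    intro k
    have h := shift_integrable' (σ2 k) (intOn_V' (hq k) 0)
    have h2 : Integrable (fun x : ℝ => if σ2 k ≤ x then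
        (1/q k) * Real.exp (-((x - σ2 k)/q k)) else 0) := by
      simpa using h
    rw [← eV k] at h2
    exact h2
  -- integrals equal one
  have hU1 : ∀ k, ∫ x : ℝ, fU k x = 1 := by
    intro k
    rw [eU k]
    have e2 := shift_integral'
      (fun t => (Real.exp (-(t/q k)) - Real.exp (-(t/p k)))/(q k - p k)) (σ2 k)
    rw [e2, integral_U' (hp k) (hpq k) 0]
    simp only [zero_div, neg_zero, Real.exp_zero, mul_one]
    rw [div_self (sub_ne_zero.mpr (hpq k).ne')]
  have hV1 : ∀ k, ∫ x : ℝ, fV k x = 1 := by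
    intro k
    rw [eV k]
    have e2 := shift_integral' (fun t => (1/q k) * Real.exp (-(t/q k))) (σ2 k)
    rw [e2, integral_V' (hq k) 0]
    simp
  -- total variation integrals
  have habs : ∀ k, ∫ x : ℝ, |fU k x - fV k x| = 2 * χ k ^ (1/(1 - χ k)) := by
    intro k
    rw [eD k]
    have e2 := shift_integral'
      (fun t => |(Real.exp (-(t/q k)) - Real.exp (-(t/p k)))/(q k - p k)
        - (1/q k) * Real.exp (-(t/q k))|) (σ2 k)
    rw [e2, abs_integral_D (hp k) (hpq k), hχ k]
  -- nonnegativity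
  have hU0 : ∀ k x, 0 ≤ fU k x := by
    intro k x
    rw [hfU k x]
    split_ifs with h
    · apply div_nonneg _ (le_of_lt (sub_pos.mpr (hpq k)))
      rw [sub_nonneg]
      apply Real.exp_le_exp.mpr
      rw [neg_div, neg_div, neg_le_neg_iff]
      exact div_le_div_of_nonneg_left (sub_nonneg.mpr h) (hp k) (le_of_lt (hpq k))
    · exact le_refl 0
  have hV0 : ∀ k x, 0 ≤ fV k x := by
    intro k x
    rw [hfV k x]
    split_ifs with h
    · exact mul_nonneg (one_div_nonneg.mpr (hq k).le) (Real.exp_pos _).le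
    · exact le_refl 0
  -- the dominating sum of product functions
  have hint_term : ∀ i : Fin K, Integrable (fun x : Fin K → ℝ =>
      ∏ j, (if j = i then |fU i (x j) - fV i (x j)|
        else if j < i then fU j (x j) else fV j (x j))) := by
    intro i
    have h := Integrable.fintype_prod (μ := fun _ => volume) (f := fun j : Fin K => fun y : ℝ =>
      if j = i then |fU i y - fV i y| else if j < i then fU j y else fV j y) ?_
    · simpa [volume_pi] using h
    · intro j
      by_cases h1 : j = i
      · simp only [if_pos h1]
        exact ((hUint i).sub (hVint i)).abs
      · simp only [if_neg h1]
        by_cases h2 : j < i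
        · simp only [if_pos h2]; exact hUint j
        · simp only [if_neg h2]; exact hVint j
  have key : ∀ i : Fin K, (∫ x : Fin K → ℝ,
      ∏ j, (if j = i then |fU i (x j) - fV i (x j)|
        else if j < i then fU j (x j) else fV j (x j)))
      = 2 * χ i ^ (1/(1 - χ i)) := by
    intro i
    have h := integral_fintype_prod_eq_prod (μ := fun _ => volume) (fun j : Fin K => fun y : ℝ =>
      if j = i then |fU i y - fV i y| else if j < i then fU j y else fV j y)
    rw [volume_pi, h, ← Finset.mul_prod_erase Finset.univ _ (Finset.mem_univ i)]
    have hfirst : (∫ y : ℝ, if i = i then |fU i y - fV i y|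
        else if i < i then fU i y else fV i y) = 2 * χ i ^ (1/(1 - χ i)) := by
      simp only [if_pos rfl]
      exact habs i
    have hrest : ∀ j ∈ Finset.univ.erase i, (∫ y : ℝ, if j = i then |fU i y - fV i y|
        else if j < i then fU j y else fV j y) = 1 := by
      intro j hj
      have hjne : j ≠ i := Finset.ne_of_mem_erase hj
      by_cases h2 : j < i
      · simp only [if_neg hjne, if_pos h2]; exact hU1 j
      · simp only [if_neg hjne, if_neg h2]; exact hV1 j
    rw [hfirst, Finset.prod_congr rfl hrest, Finset.prod_const_one, mul_one]
  -- pointwise bound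
  have hpt : ∀ x : Fin K → ℝ, |(∏ k, fU k (x k)) - ∏ k, fV k (x k)|
      ≤ ∑ i, ∏ j, (if j = i then |fU i (x j) - fV i (x j)|
        else if j < i then fU j (x j) else fV j (x j)) := by
    intro x
    refine (tele_bound (fun k => fU k (x k)) (fun k => fV k (x k))
      (fun k => hU0 k (x k)) (fun k => hV0 k (x k)) Finset.univ).trans (le_of_eq ?_)
    refine Finset.sum_congr rfl (fun i _ => ?_)
    rw [← Finset.mul_prod_erase Finset.univ _ (Finset.mem_univ i), if_pos rfl]
    congr 1
    refine Finset.prod_congr ?_ (fun j hj => ?_)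
    · ext j; simp
    · rw [if_neg (Finset.ne_of_mem_erase hj)]
  -- combining
  have hmono : (∫ x : Fin K → ℝ, |(∏ k, fU k (x k)) - ∏ k, fV k (x k)|)
      ≤ ∑ i, 2 * χ i ^ (1/(1 - χ i)) := by
    calc (∫ x : Fin K → ℝ, |(∏ k, fU k (x k)) - ∏ k, fV k (x k)|)
        ≤ ∫ x : Fin K → ℝ, ∑ i, ∏ j, (if j = i then |fU i (x j) - fV i (x j)|
            else if j < i then fU j (x j) else fV j (x j)) := by
          refine integral_mono_of_nonneg (Filter.Eventually.of_forall fun x => abs_nonneg _)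
            (integrable_finset_sum _ (fun i _ => hint_term i))
            (Filter.Eventually.of_forall hpt)
      _ = ∑ i, ∫ x : Fin K → ℝ, ∏ j, (if j = i then |fU i (x j) - fV i (x j)|
            else if j < i then fU j (x j) else fV j (x j)) :=
          integral_finset_sum _ (fun i _ => hint_term i)
      _ = ∑ i, 2 * χ i ^ (1/(1 - χ i)) := Finset.sum_congr rfl (fun i _ => key i)
  have hsum : ∑ i, 2 * χ i ^ (1/(1 - χ i)) = 2 * ∑ i, χ i ^ (1/(1 - χ i)) := by
    rw [Finset.mul_sum]
  rw [hsum] at hmono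
  linarith
end

section
/- Define η(x) := x^{1/(1−x)} for x ∈ (0,1). Then η is twice differentiable on (0,1) with η″(x) ≤ 0 for all x ∈ (0,1), and η is strictly monotonically increasing on (0,1). Consequently η is a monotonically increasing concave function on (0,1). -/
open Real Set

noncomputable def etaF (x : ℝ) : ℝ := Real.log x / (1 - x)
noncomputable def etaF1 (x : ℝ) : ℝ := ((1 - x) / x + Real.log x) / (1 - x) ^ 2
noncomputable def etaF2 (x : ℝ) : ℝ :=
  ((x - 1) / x ^ 2 * (1 - x) ^ 2 + 2 * ((1 - x) / x + Real.log x) * (1 - x)) / (1 - x) ^ 4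

lemma hasDerivAt_etaF {x : ℝ} (hx0 : 0 < x) (hx1 : x < 1) :
    HasDerivAt etaF (etaF1 x) x := by
  have ht : (1 : ℝ) - x ≠ 0 := by linarith
  have h := (Real.hasDerivAt_log hx0.ne').div
    ((hasDerivAt_const x (1:ℝ)).sub (hasDerivAt_id x)) ht
  refine h.congr_deriv ?_
  simp only [Pi.sub_apply, id]
  unfold etaF1
  field_simp
  ring

lemma hasDerivAt_etaF1 {x : ℝ} (hx0 : 0 < x) (hx1 : x < 1) :
    HasDerivAt etaF1 (etaF2 x) x := by
  have ht : (1 : ℝ) - x ≠ 0 := by linarith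
  have hnum : HasDerivAt (fun y : ℝ => (1 - y) / y + Real.log y) ((x - 1) / x ^ 2) x := by
    have h1 := (((hasDerivAt_const x (1:ℝ)).sub (hasDerivAt_id x)).div (hasDerivAt_id x)
      hx0.ne').add (Real.hasDerivAt_log hx0.ne')
    refine h1.congr_deriv ?_
    simp only [Pi.sub_apply, id]
    field_simp
    ring
  have hden : HasDerivAt (fun y : ℝ => (1 - y) ^ 2) (-(2 * (1 - x))) x := by
    have h2 := ((hasDerivAt_const x (1:ℝ)).sub (hasDerivAt_id x)).pow 2
    refine h2.congr_deriv ?_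
    simp [id]
  have h := hnum.div hden (by positivity)
  refine h.congr_deriv ?_
  unfold etaF2
  rw [div_eq_div_iff (by positivity) (by positivity)]
  ring

-- Padé bound: (x+1) log x ≤ 2 (x-1) for 0 < x ≤ 1
lemma pade {x : ℝ} (hx0 : 0 < x) (hx1 : x ≤ 1) : (x + 1) * Real.log x ≤ 2 * (x - 1) := by
  set F : ℝ → ℝ := fun y => 2 * (y - 1) / (y + 1) - Real.log y with hF
  have hder : ∀ y ∈ Set.Ioi (0:ℝ), HasDerivAt F (-(y - 1) ^ 2 / (y * (y + 1) ^ 2)) y := by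
    intro y hy
    have hy0 : (0:ℝ) < y := hy
    have hy1 : y + 1 ≠ 0 := by positivity
    have h1 := (((hasDerivAt_id y).sub_const 1).const_mul 2).div
      ((hasDerivAt_id y).add_const 1) hy1
    have h := h1.sub (Real.hasDerivAt_log hy0.ne')
    simp only [id] at h
    refine h.congr_deriv ?_
    field_simp
    ring
  have hanti : AntitoneOn F (Set.Icc x 1) := by
    apply antitoneOn_of_deriv_nonpos (convex_Icc x 1)
    · intro y hy
      exact ((hder y (lt_of_lt_of_le hx0 hy.1)).continuousAt).continuousWithinAt
    · intro y hy
      rw [interior_Icc] at hy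
      exact ((hder y (lt_trans hx0 hy.1)).differentiableAt).differentiableWithinAt
    · intro y hy
      rw [interior_Icc] at hy
      have hy0 : (0:ℝ) < y := lt_trans hx0 hy.1
      rw [(hder y hy0).deriv]
      apply div_nonpos_of_nonpos_of_nonneg
      · nlinarith [sq_nonneg (y - 1)]
      · positivity
  have hFx : F 1 ≤ F x := hanti (Set.mem_Icc.mpr ⟨le_refl x, hx1⟩)
    (Set.mem_Icc.mpr ⟨hx1, le_refl 1⟩) hx1
  have hF1 : F 1 = 0 := by simp [hF]
  rw [hF1] at hFx
  have hx1' : (0:ℝ) < x + 1 := by linarith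
  have : Real.log x ≤ 2 * (x - 1) / (x + 1) := by
    simp only [hF] at hFx; linarith
  calc (x + 1) * Real.log x ≤ (x + 1) * (2 * (x - 1) / (x + 1)) := by
        exact mul_le_mul_of_nonneg_left this (le_of_lt hx1')
    _ = 2 * (x - 1) := by field_simp

lemma log_lower {x : ℝ} (hx0 : 0 < x) (hx1 : x < 1) : x - 1 < x * Real.log x := by
  have hne : x⁻¹ ≠ 1 := by
    intro h
    rw [inv_eq_one] at h
    linarith
  have h := Real.log_lt_sub_one_of_pos (inv_pos.mpr hx0) hne
  rw [Real.log_inv] at h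
  have hxi : x * x⁻¹ = 1 := mul_inv_cancel₀ hx0.ne'
  nlinarith [mul_lt_mul_of_pos_left h hx0]

lemma key {x : ℝ} (hx0 : 0 < x) (hx1 : x < 1) : etaF1 x ^ 2 + etaF2 x ≤ 0 := by
  set L := Real.log x with hL
  have hL1 : x - 1 < x * L := log_lower hx0 hx1
  have hL2 : (x + 1) * L ≤ 2 * (x - 1) := pade hx0 hx1.le
  set A : ℝ := (1 - x) + x * L + x * (1 - x) with hA
  have hApos : 0 < A := by nlinarith
  have hB : (1 + x) * A ≤ (1 - x) * (1 + x ^ 2) := by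
    nlinarith [mul_le_mul_of_nonneg_left hL2 hx0.le]
  have hSq : ((1 + x) * A) ^ 2 ≤ ((1 - x) * (1 + x ^ 2)) ^ 2 := by
    have h1 : 0 ≤ (1 + x) * A := by positivity
    nlinarith
  have hPoly : ((1 - x) * (1 + x ^ 2)) ^ 2 ≤ (1 + x) ^ 2 * ((1 - x) ^ 2 * (x ^ 2 + (1 - x))) := by
    nlinarith [mul_nonneg hx0.le (sq_nonneg ((1 - x) ^ 2))]
  have hA2 : A ^ 2 ≤ (1 - x) ^ 2 * (x ^ 2 + (1 - x)) := by
    have h2 : (1 + x) ^ 2 * (A ^ 2) ≤ (1 + x) ^ 2 * ((1 - x) ^ 2 * (x ^ 2 + (1 - x))) := by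
      nlinarith
    exact le_of_mul_le_mul_left h2 (by positivity)
  have hM : A ^ 2 - x ^ 2 * (1 - x) ^ 2 - (1 - x) ^ 3 ≤ 0 := by nlinarith
  have heq : etaF1 x ^ 2 + etaF2 x
      = (A ^ 2 - x ^ 2 * (1 - x) ^ 2 - (1 - x) ^ 3) / (x ^ 2 * (1 - x) ^ 4) := by
    have hxne : x ≠ 0 := hx0.ne'
    have htne : (1:ℝ) - x ≠ 0 := by linarith
    unfold etaF1 etaF2
    rw [hA, ← hL]
    field_simp
    ring
  rw [heq]
  exact div_nonpos_of_nonpos_of_nonneg hM (by positivity)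

theorem stmt_5 (η : ℝ → ℝ) (hη : ∀ x : ℝ, η x = x ^ (1 / (1 - x))) :
    (∀ x ∈ Set.Ioo (0 : ℝ) 1,
      DifferentiableAt ℝ η x ∧ DifferentiableAt ℝ (deriv η) x ∧
        deriv (deriv η) x ≤ 0) ∧
    StrictMonoOn η (Set.Ioo (0 : ℝ) 1) ∧
    ConcaveOn ℝ (Set.Ioo (0 : ℝ) 1) η := by
  have hEq : Set.EqOn η (fun y => Real.exp (etaF y)) (Set.Ioo (0:ℝ) 1) := by
    intro y hy
    rw [hη y, Real.rpow_def_of_pos hy.1]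
    unfold etaF
    rw [mul_one_div]
  have hd1 : ∀ x ∈ Set.Ioo (0:ℝ) 1,
      HasDerivAt η (Real.exp (etaF x) * etaF1 x) x := by
    intro x hx
    exact ((hasDerivAt_etaF hx.1 hx.2).exp).congr_of_eventuallyEq
      (Filter.eventuallyEq_of_mem (Ioo_mem_nhds hx.1 hx.2) hEq)
  have hderiv1 : ∀ x ∈ Set.Ioo (0:ℝ) 1,
      deriv η x = Real.exp (etaF x) * etaF1 x := fun x hx => (hd1 x hx).deriv
  have hd2 : ∀ x ∈ Set.Ioo (0:ℝ) 1,
      HasDerivAt (deriv η)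
        (Real.exp (etaF x) * etaF1 x * etaF1 x + Real.exp (etaF x) * etaF2 x) x := by
    intro x hx
    have base : HasDerivAt (fun y => Real.exp (etaF y) * etaF1 y)
        (Real.exp (etaF x) * etaF1 x * etaF1 x + Real.exp (etaF x) * etaF2 x) x :=
      ((hasDerivAt_etaF hx.1 hx.2).exp).mul (hasDerivAt_etaF1 hx.1 hx.2)
    exact base.congr_of_eventuallyEq
      (Filter.eventuallyEq_of_mem (Ioo_mem_nhds hx.1 hx.2) hderiv1)
  have hpos : ∀ x ∈ Set.Ioo (0:ℝ) 1, 0 < etaF1 x := by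
    intro x hx
    have h1 : 0 < ((1 - x) + x * Real.log x) / x :=
      div_pos (by linarith [log_lower hx.1 hx.2]) hx.1
    have hxne : x ≠ 0 := hx.1.ne'
    have h2 : (1 - x) / x + Real.log x = ((1 - x) + x * Real.log x) / x := by
      field_simp
    unfold etaF1
    rw [h2]
    exact div_pos h1 (by nlinarith [hx.2, sq_nonneg (1 - x)])
  have hcont : ContinuousOn η (Set.Ioo (0:ℝ) 1) :=
    fun x hx => ((hd1 x hx).continuousAt).continuousWithinAt
  have hkey : ∀ x ∈ Set.Ioo (0:ℝ) 1, deriv (deriv η) x ≤ 0 := by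
    intro x hx
    rw [(hd2 x hx).deriv]
    have h := key hx.1 hx.2
    nlinarith [Real.exp_pos (etaF x)]
  refine ⟨fun x hx => ⟨(hd1 x hx).differentiableAt, (hd2 x hx).differentiableAt, hkey x hx⟩,
    ?_, ?_⟩
  · apply strictMonoOn_of_deriv_pos (convex_Ioo 0 1) hcont
    intro x hx
    rw [interior_Ioo] at hx
    rw [hderiv1 x hx]
    exact mul_pos (Real.exp_pos _) (hpos x hx)
  · apply concaveOn_of_deriv2_nonpos (convex_Ioo 0 1) hcont
    · rw [interior_Ioo]
      exact fun x hx => ((hd1 x hx).differentiableAt).differentiableWithinAt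
    · rw [interior_Ioo]
      exact fun x hx => ((hd2 x hx).differentiableAt).differentiableWithinAt
    · rw [interior_Ioo]
      intro x hx
      show deriv (deriv η) x ≤ 0
      exact hkey x hx
end

section
/- Fix constants A > 0, χ > 0 and B > 1, and define Ξ(κ) := e^{Aχκ} − ABχκ(1+κ) ln(1 + 1/κ) for κ > 0. Then the equation Ξ(κ) = B has a unique solution κ* in (0,∞); this solution satisfies κ* ≥ ln(B)/(Aχ); and γ* := 1/κ* is the unique maximizer over γ ∈ (0, Aχ/ln(B)] of the effective-rate function R(γ) := (1 − B e^{−Aχ/γ}) ln(1 + γ). -/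
open Real Set Filter Topology

lemma hasDerivAt_L {κ : ℝ} (hκ : 0 < κ) :
    HasDerivAt (fun x => Real.log (1 + 1 / x)) (-(κ * (κ + 1))⁻¹) κ := by
  have h1 : HasDerivAt (fun x : ℝ => 1 + 1 / x) (-(κ ^ 2)⁻¹) κ := by
    simpa using (hasDerivAt_inv hκ.ne').const_add 1
  have h2 : (0:ℝ) < 1 + 1 / κ := by positivity
  have := (Real.hasDerivAt_log h2.ne').comp κ h1
  refine this.congr_deriv ?_
  field_simp

lemma aux_log_lt {t : ℝ} (ht : 0 < t) : 2 * Real.log (1 + t) < t + t / (1 + t) := by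
  set ψ : ℝ → ℝ := fun t => t + t / (1 + t) - 2 * Real.log (1 + t) with hψ
  have key : StrictMonoOn ψ (Ici 0) := by
    apply strictMonoOn_of_deriv_pos (convex_Ici 0)
    · apply ContinuousOn.sub
      · apply ContinuousOn.add continuousOn_id
        exact ContinuousOn.div continuousOn_id (by fun_prop) (fun x hx => by
          simp only [mem_Ici] at hx; positivity)
      · apply ContinuousOn.mul continuousOn_const
        apply ContinuousOn.log (by fun_prop)
        intro x hx; simp only [mem_Ici] at hx; positivity
    · intro x hx
      rw [interior_Ici] at hx
      simp only [mem_Ioi] at hx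
      have hx1 : (0:ℝ) < 1 + x := by linarith
      have hd1 : HasDerivAt (fun t : ℝ => t / (1 + t)) ((1 + x)⁻¹ ^ 2) x := by
        have : HasDerivAt (fun t : ℝ => t / (1 + t))
            ((1 * (1 + x) - x * 1) / (1 + x) ^ 2) x :=
          (hasDerivAt_id x).div ((hasDerivAt_id x).const_add 1) hx1.ne'
        convert this using 1
        field_simp
        ring
      have hd2 : HasDerivAt (fun t : ℝ => Real.log (1 + t)) ((1 + x)⁻¹) x := by
        simpa [Function.comp_def] using (Real.hasDerivAt_log hx1.ne').comp x ((hasDerivAt_id x).const_add 1)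
      have hd : HasDerivAt ψ (1 + (1 + x)⁻¹ ^ 2 - 2 * (1 + x)⁻¹) x :=
        ((hasDerivAt_id x).add hd1).sub (hd2.const_mul 2)
      rw [hd.deriv]
      have : 1 + (1 + x)⁻¹ ^ 2 - 2 * (1 + x)⁻¹ = (1 - (1 + x)⁻¹) ^ 2 := by ring
      rw [this]
      have : (1:ℝ) - (1 + x)⁻¹ > 0 := by
        have : (1 + x)⁻¹ < 1 := by
          rw [inv_lt_one_iff₀]; right; linarith
        linarith
      positivity
  have h0 : ψ 0 = 0 := by simp [hψ]
  have := key (self_mem_Ici) (le_of_lt ht : (0:ℝ) ≤ t) ht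
  rw [h0] at this
  simp only [hψ] at this
  linarith

noncomputable def Xi (c B κ : ℝ) : ℝ :=
  Real.exp (c * κ) - c * B * κ * (1 + κ) * Real.log (1 + 1 / κ)

noncomputable def ff (c B κ : ℝ) : ℝ :=
  (1 - B * Real.exp (-(c * κ))) * Real.log (1 + 1 / κ)

lemma hasDerivAt_Xi (c B : ℝ) {κ : ℝ} (hκ : 0 < κ) :
    HasDerivAt (Xi c B)
      (c * Real.exp (c * κ) -
        c * B * ((1 + 2 * κ) * Real.log (1 + 1 / κ) - 1)) κ := by
  have he : HasDerivAt (fun x => Real.exp (c * x)) (c * Real.exp (c * κ)) κ := by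
    simpa [mul_comm, Function.comp_def] using (Real.hasDerivAt_exp (c * κ)).comp κ ((hasDerivAt_id κ).const_mul c)
  have hp : HasDerivAt (fun x : ℝ => c * B * x * (1 + x) * Real.log (1 + 1 / x))
      (c * B * ((1 + 2 * κ) * Real.log (1 + 1 / κ) - 1)) κ := by
    have h1 : HasDerivAt (fun x : ℝ => c * B * x * (1 + x)) (c * B * (1 + 2 * κ)) κ := by
      have : HasDerivAt (fun x : ℝ => c * B * x * (1 + x))
          (c * B * 1 * (1 + κ) + c * B * κ * 1) κ := by
        exact (((hasDerivAt_id κ).const_mul (c * B))).mul ((hasDerivAt_id κ).const_add 1)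
      convert this using 1; ring
    have := h1.mul (hasDerivAt_L hκ)
    refine this.congr_deriv ?_
    have hκ1 : κ * (κ + 1) ≠ 0 := by positivity
    field_simp
    ring
  exact he.sub hp

lemma hasDerivAt_ff (c B : ℝ) {κ : ℝ} (hκ : 0 < κ) :
    HasDerivAt (ff c B)
      ((B - Xi c B κ) / (κ * (κ + 1) * Real.exp (c * κ))) κ := by
  have h1 : HasDerivAt (fun x : ℝ => 1 - B * Real.exp (-(c * x)))
      (c * B * Real.exp (-(c * κ))) κ := by
    have he : HasDerivAt (fun x : ℝ => Real.exp (-(c * x))) (-c * Real.exp (-(c * κ))) κ := by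
      have : HasDerivAt (fun x : ℝ => -(c * x)) (-c) κ := by
        simpa [Pi.neg_def] using ((hasDerivAt_id κ).const_mul c).neg
      simpa [mul_comm, Function.comp_def] using (Real.hasDerivAt_exp (-(c * κ))).comp κ this
    have := (he.const_mul B).const_sub 1
    refine this.congr_deriv ?_; ring
  have := h1.mul (hasDerivAt_L hκ)
  refine this.congr_deriv ?_
  rw [Xi]
  have hκ1 : (0:ℝ) < κ + 1 := by linarith
  have hexp : Real.exp (-(c * κ)) = (Real.exp (c * κ))⁻¹ := by
    rw [← Real.exp_neg]
  rw [hexp]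
  have hE : Real.exp (c * κ) ≠ 0 := (Real.exp_pos _).ne'
  field_simp
  ring

lemma continuousOn_Xi (c B : ℝ) : ContinuousOn (Xi c B) (Ioi 0) := fun x hx =>
  (hasDerivAt_Xi c B (mem_Ioi.mp hx)).continuousAt.continuousWithinAt

lemma strictConvexOn_Xi {c B : ℝ} (hc : 0 < c) (hB : 1 < B) :
    StrictConvexOn ℝ (Ioi 0) (Xi c B) := by
  apply StrictMonoOn.strictConvexOn_of_deriv (convex_Ioi 0) (continuousOn_Xi c B)
  rw [interior_Ioi]
  have hLcont : ContinuousOn (fun κ : ℝ => Real.log (1 + 1 / κ)) (Ioi 0) := fun x hx =>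
    (hasDerivAt_L (mem_Ioi.mp hx)).continuousAt.continuousWithinAt
  have hmono : StrictMonoOn
      (fun κ : ℝ => c * Real.exp (c * κ) -
        c * B * ((1 + 2 * κ) * Real.log (1 + 1 / κ) - 1)) (Ioi 0) := by
    apply strictMonoOn_of_deriv_pos (convex_Ioi 0)
    · apply ContinuousOn.sub
      · exact Continuous.continuousOn (by fun_prop)
      · exact continuousOn_const.mul
          ((((continuous_const.add (continuous_const.mul continuous_id)).continuousOn).mul hLcont).sub continuousOn_const)
    · rw [interior_Ioi]
      intro x hx
      have hx : (0:ℝ) < x := hx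
      have hd : HasDerivAt
          (fun κ : ℝ => c * Real.exp (c * κ) -
            c * B * ((1 + 2 * κ) * Real.log (1 + 1 / κ) - 1))
          (c * (c * Real.exp (c * x)) -
            c * B * (2 * Real.log (1 + 1 / x) + (1 + 2 * x) * (-(x * (x + 1))⁻¹))) x := by
        have he : HasDerivAt (fun κ : ℝ => Real.exp (c * κ)) (c * Real.exp (c * x)) x := by
          simpa [mul_comm, Function.comp_def] using (Real.hasDerivAt_exp (c * x)).comp x ((hasDerivAt_id x).const_mul c)
        have h2 : HasDerivAt (fun κ : ℝ => 1 + 2 * κ) 2 x := by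
          simpa using ((hasDerivAt_id x).const_mul 2).const_add 1
        have h3 := (h2.mul (hasDerivAt_L hx)).sub_const 1
        exact (he.const_mul c).sub ((h3).const_mul (c * B))
      rw [hd.deriv]
      have hB0 : 0 < B := by linarith
      have haux := aux_log_lt (t := 1 / x) (by positivity)
      have hrhs : 1 / x + (1 / x) / (1 + 1 / x) = (1 + 2 * x) * (x * (x + 1))⁻¹ := by
        have h1 : x ≠ 0 := hx.ne'
        have h2 : x + 1 ≠ 0 := by positivity
        field_simp
        ring
      rw [hrhs] at haux
      have hpos : 0 < c * B * ((1 + 2 * x) * (x * (x + 1))⁻¹ - 2 * Real.log (1 + 1 / x)) := by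
        apply mul_pos (by positivity)
        linarith
      have : 0 < c * (c * Real.exp (c * x)) := by positivity
      nlinarith [this, hpos]
  exact hmono.congr (fun x hx => ((hasDerivAt_Xi c B hx).deriv).symm) |>.mono (by rfl)

lemma Xi_tendsto_one {c B : ℝ} (hc : 0 < c) :
    Tendsto (Xi c B) (𝓝[>] 0) (𝓝 1) := by
  have heq : ∀ᶠ κ in 𝓝[>] (0:ℝ), Xi c B κ =
      Real.exp (c * κ) - c * B * (κ * (1 + κ) * Real.log (κ + 1))
        + c * B * ((1 + κ) * (Real.log κ * κ)) := by
    filter_upwards [self_mem_nhdsWithin] with κ hκ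
    have hκ : (0:ℝ) < κ := hκ
    rw [Xi]
    have : Real.log (1 + 1 / κ) = Real.log (κ + 1) - Real.log κ := by
      rw [← Real.log_div (by positivity) hκ.ne']
      congr 1
      field_simp
    rw [this]
    ring
  rw [tendsto_congr' heq]
  have h1 : Tendsto (fun κ : ℝ => Real.exp (c * κ) - c * B * (κ * (1 + κ) * Real.log (κ + 1)))
      (𝓝[>] 0) (𝓝 1) := by
    have : ContinuousAt (fun κ : ℝ => Real.exp (c * κ) - c * B * (κ * (1 + κ) * Real.log (κ + 1))) 0 := by
      apply ContinuousAt.sub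
      · fun_prop
      · apply ContinuousAt.mul continuousAt_const
        apply ContinuousAt.mul (by fun_prop)
        exact (Real.continuousAt_log (by norm_num)).comp (by fun_prop)
    have := this.tendsto.mono_left (nhdsWithin_le_nhds (s := Ioi 0))
    simpa using this
  have h2 : Tendsto (fun κ : ℝ => c * B * ((1 + κ) * (Real.log κ * κ))) (𝓝[>] 0) (𝓝 0) := by
    have hlog : Tendsto (fun κ : ℝ => Real.log κ * κ) (𝓝[>] (0:ℝ)) (𝓝 0) := by
      have := tendsto_log_mul_rpow_nhdsGT_zero (r := 1) one_pos
      refine this.congr' ?_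
      filter_upwards [self_mem_nhdsWithin] with x hx
      rw [Real.rpow_one]
    have h1κ : Tendsto (fun κ : ℝ => 1 + κ) (𝓝[>] (0:ℝ)) (𝓝 1) := by
      have : ContinuousAt (fun κ : ℝ => 1 + κ) 0 := by fun_prop
      simpa using this.tendsto.mono_left (nhdsWithin_le_nhds (s := Ioi 0))
    have := (h1κ.mul hlog).const_mul (c * B)
    simpa using this
  have := h1.add h2
  simpa using this

lemma Xi_tendsto_atTop {c B : ℝ} (hc : 0 < c) (hB : 1 < B) :
    Tendsto (Xi c B) atTop atTop := by
  have hbound : ∀ᶠ κ in (atTop : Filter ℝ), Real.exp (c * κ) - c * B * (1 + κ) ≤ Xi c B κ := by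
    filter_upwards [eventually_gt_atTop (0:ℝ)] with κ hκ
    rw [Xi]
    have hlog : Real.log (1 + 1 / κ) ≤ 1 / κ := by
      have := Real.log_le_sub_one_of_pos (x := 1 + 1 / κ) (by positivity)
      linarith
    have hlog0 : 0 ≤ Real.log (1 + 1 / κ) := Real.log_nonneg (by
      have := one_div_pos.mpr hκ; linarith)
    have hcB : 0 < c * B := by positivity
    have h1 : c * B * κ * (1 + κ) * Real.log (1 + 1 / κ) ≤ c * B * κ * (1 + κ) * (1 / κ) := by
      apply mul_le_mul_of_nonneg_left hlog
      positivity
    have h2 : c * B * κ * (1 + κ) * (1 / κ) = c * B * (1 + κ) := by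
      field_simp
    linarith [h1, h2 ▸ h1]
  apply tendsto_atTop_mono' _ hbound
  have h3 : Tendsto (fun κ : ℝ => Real.exp (c * κ) / κ) atTop atTop := by
    have h4 : Tendsto (fun y : ℝ => c * (Real.exp y / y)) atTop atTop :=
      (Real.tendsto_exp_div_pow_atTop 1).congr (by simp) |>.const_mul_atTop hc
    have h5 : Tendsto (fun κ : ℝ => c * κ) atTop atTop :=
      Tendsto.const_mul_atTop hc tendsto_id
    have := h4.comp h5
    refine this.congr' ?_
    filter_upwards [eventually_gt_atTop (0:ℝ)] with κ hκ
    rw [Function.comp_apply]; field_simp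
  have h6 : Tendsto (fun κ : ℝ => κ * (Real.exp (c * κ) / κ - c * B)) atTop atTop :=
    Tendsto.atTop_mul_atTop₀ tendsto_id (h3.atTop_add tendsto_const_nhds)
  have h7 := h6.atTop_add (tendsto_const_nhds (x := -(c * B)))
  refine h7.congr' ?_
  filter_upwards [eventually_gt_atTop (0:ℝ)] with κ hκ
  field_simp
  ring

lemma convex_between {c B : ℝ} (hc : 0 < c) (hB : 1 < B) {x y z : ℝ}
    (hx : 0 < x) (hxy : x < y) (hyz : y < z) :
    Xi c B y < (z - y) / (z - x) * Xi c B x + (y - x) / (z - x) * Xi c B z := by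
  have hconv := strictConvexOn_Xi hc hB
  have hzx : 0 < z - x := by linarith
  have ha : 0 < (z - y) / (z - x) := by apply div_pos <;> linarith
  have hb : 0 < (y - x) / (z - x) := by apply div_pos <;> linarith
  have hab : (z - y) / (z - x) + (y - x) / (z - x) = 1 := by
    field_simp
    ring
  have hy : (z - y) / (z - x) * x + (y - x) / (z - x) * z = y := by
    field_simp; ring
  have := hconv.2 (mem_Ioi.mpr hx) (mem_Ioi.mpr (by linarith : (0:ℝ) < z))
    (by linarith : x ≠ z) ha hb hab
  rw [smul_eq_mul, smul_eq_mul, smul_eq_mul, smul_eq_mul, hy] at this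
  exact this

lemma root_structure {c B : ℝ} (hc : 0 < c) (hB : 1 < B) :
    ∃ κs : ℝ, Real.log B / c < κs ∧ Xi c B κs = B ∧
      (∀ κ, 0 < κ → κ < κs → Xi c B κ < B) ∧
      (∀ κ, κs < κ → B < Xi c B κ) := by
  have hlogB : 0 < Real.log B := Real.log_pos hB
  set κ₁ := Real.log B / c with hκ₁def
  have hκ₁ : 0 < κ₁ := by positivity
  have hXiκ₁ : Xi c B κ₁ < B := by
    rw [Xi]
    have h1 : c * κ₁ = Real.log B := by rw [hκ₁def]; field_simp
    rw [h1, Real.exp_log (by linarith)]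
    have h2 : 0 < Real.log (1 + 1 / κ₁) := Real.log_pos (by
      have := one_div_pos.mpr hκ₁; linarith)
    have h3 : 0 < c * B * κ₁ * (1 + κ₁) * Real.log (1 + 1 / κ₁) := by positivity
    linarith
  obtain ⟨κ₂, hκ₂B, hκ₂gt⟩ :=
    (((Xi_tendsto_atTop hc hB).eventually_gt_atTop B).and (eventually_gt_atTop κ₁)).exists
  have hsub : Icc κ₁ κ₂ ⊆ Ioi 0 := fun x hx => lt_of_lt_of_le hκ₁ hx.1
  have hIVT := intermediate_value_Icc hκ₂gt.le ((continuousOn_Xi c B).mono hsub)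
  have hBmem : B ∈ Icc (Xi c B κ₁) (Xi c B κ₂) := ⟨hXiκ₁.le, hκ₂B.le⟩
  obtain ⟨κs, hκsmem, hκseq⟩ := hIVT hBmem
  have hκs0 : 0 < κs := lt_of_lt_of_le hκ₁ hκsmem.1
  have hκ₁κs : κ₁ < κs := by
    rcases lt_or_eq_of_le hκsmem.1 with h | h
    · exact h
    · rw [← h] at hκseq; rw [hκseq] at hXiκ₁; linarith
  refine ⟨κs, hκ₁κs, hκseq, ?_, ?_⟩
  · -- Xi < B on (0, κs)
    intro κ hκ0 hκlt
    by_contra hge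
    push_neg at hge
    -- then Xi t > B for all t ∈ (0, κ)
    have hall : ∀ t, 0 < t → t < κ → B < Xi c B t := by
      intro t ht0 htκ
      have hb := convex_between hc hB ht0 htκ hκlt
      rw [hκseq] at hb
      have hzx : 0 < κs - t := by linarith
      have ha : 0 < (κs - κ) / (κs - t) := by apply div_pos <;> linarith
      have hb2 : 0 < (κ - t) / (κs - t) := by apply div_pos <;> linarith
      have hab : (κs - κ) / (κs - t) + (κ - t) / (κs - t) = 1 := by field_simp; ring
      nlinarith [hb, hge, ha, hb2, hab]
    have hev : ∀ᶠ t in 𝓝[>] (0:ℝ), Xi c B t < B :=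
      (Xi_tendsto_one hc).eventually_lt_const hB
    have hmem : Ioo (0:ℝ) κ ∈ 𝓝[>] (0:ℝ) := Ioo_mem_nhdsGT_of_mem ⟨le_refl 0, hκ0⟩
    obtain ⟨t, htlt, htmem⟩ := (hev.and (eventually_of_mem hmem (fun x hx => hx))).exists
    exact absurd (hall t htmem.1 htmem.2) (by linarith)
  · -- Xi > B on (κs, ∞)
    intro κ hκgt
    have hb := convex_between hc hB hκ₁ hκ₁κs hκgt
    rw [hκseq] at hb
    have hzx : 0 < κ - κ₁ := by linarith
    have ha : 0 < (κ - κs) / (κ - κ₁) := by apply div_pos <;> linarith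
    have hb2 : 0 < (κs - κ₁) / (κ - κ₁) := by apply div_pos <;> linarith
    have hab : (κ - κs) / (κ - κ₁) + (κs - κ₁) / (κ - κ₁) = 1 := by field_simp; ring
    nlinarith [hb, hXiκ₁, ha, hb2, hab]

lemma continuousOn_ff (c B : ℝ) {s : Set ℝ} (hs : s ⊆ Ioi 0) : ContinuousOn (ff c B) s :=
  fun x hx => (hasDerivAt_ff c B (mem_Ioi.mp (hs hx))).continuousAt.continuousWithinAt

lemma ff_mono {c B κs : ℝ} (hc : 0 < c) (hB : 1 < B) {a : ℝ} (ha : 0 < a) (haκs : a < κs)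
    (hsign : ∀ κ, 0 < κ → κ < κs → Xi c B κ < B) :
    StrictMonoOn (ff c B) (Icc a κs) := by
  apply strictMonoOn_of_deriv_pos (convex_Icc a κs)
  · exact continuousOn_ff c B (fun x hx => lt_of_lt_of_le ha hx.1)
  · rw [interior_Icc]
    intro x hx
    have hx0 : 0 < x := lt_trans ha hx.1
    rw [(hasDerivAt_ff c B hx0).deriv]
    have := hsign x hx0 hx.2
    apply div_pos (by linarith)
    positivity

lemma ff_anti {c B κs : ℝ} (hc : 0 < c) (hB : 1 < B) (hκs : 0 < κs)
    (hsign : ∀ κ, κs < κ → B < Xi c B κ) :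
    StrictAntiOn (ff c B) (Ici κs) := by
  apply strictAntiOn_of_deriv_neg (convex_Ici κs)
  · exact continuousOn_ff c B (fun x hx => lt_of_lt_of_le hκs hx)
  · rw [interior_Ici]
    intro x hx
    have hx0 : 0 < x := lt_trans hκs hx
    rw [(hasDerivAt_ff c B hx0).deriv]
    have := hsign x hx
    apply div_neg_of_neg_of_pos (by linarith)
    positivity

theorem stmt_6 (A χ B : ℝ) (hA : 0 < A) (hχ : 0 < χ) (hB : 1 < B)
    (Ξ : ℝ → ℝ)
    (hΞ : ∀ κ : ℝ, Ξ κ = Real.exp (A * χ * κ) -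
      A * B * χ * κ * (1 + κ) * Real.log (1 + 1 / κ))
    (R : ℝ → ℝ)
    (hR : ∀ γ : ℝ, R γ = (1 - B * Real.exp (-(A * χ) / γ)) * Real.log (1 + γ)) :
    ∃ κs : ℝ, 0 < κs ∧ Ξ κs = B ∧
      (∀ κ : ℝ, 0 < κ → Ξ κ = B → κ = κs) ∧
      Real.log B / (A * χ) ≤ κs ∧
      1 / κs ∈ Set.Ioc (0 : ℝ) (A * χ / Real.log B) ∧
      (∀ γ ∈ Set.Ioc (0 : ℝ) (A * χ / Real.log B), γ ≠ 1 / κs → R γ < R (1 / κs)) := by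
  set c := A * χ with hcdef
  have hc : 0 < c := by positivity
  have hΞXi : ∀ κ, Ξ κ = Xi c B κ := by
    intro κ; rw [hΞ, Xi, hcdef]; ring_nf
  have hlogB : 0 < Real.log B := Real.log_pos hB
  obtain ⟨κs, hκ₁κs, hroot, hlt, hgt⟩ := root_structure hc hB
  have hκ₁ : 0 < Real.log B / c := by positivity
  have hκs0 : 0 < κs := lt_trans hκ₁ hκ₁κs
  have hRff : ∀ γ : ℝ, 0 < γ → R γ = ff c B (1 / γ) := by
    intro γ hγ
    rw [hR, ff, one_div_one_div]
    congr 2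
    rw [neg_div]
    congr 1
    field_simp
  have hmono := ff_mono hc hB hκ₁ hκ₁κs hlt
  have hanti := ff_anti hc hB hκs0 hgt
  refine ⟨κs, hκs0, by rw [hΞXi]; exact hroot, ?_, hκ₁κs.le, ?_, ?_⟩
  · intro κ hκ0 hκeq
    rw [hΞXi] at hκeq
    rcases lt_trichotomy κ κs with h | h | h
    · exact absurd hκeq (by have := hlt κ hκ0 h; linarith)
    · exact h
    · exact absurd hκeq (by have := hgt κ h; linarith)
  · constructor
    · positivity
    · rw [← one_div_div (Real.log B) c]
      exact one_div_le_one_div_of_le (by positivity) hκ₁κs.le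
  · intro γ hγ hγne
    obtain ⟨hγ0, hγle⟩ := hγ
    set κ := 1 / γ with hκdef
    have hκ0 : 0 < κ := by positivity
    have hκge : Real.log B / c ≤ κ := by
      rw [hκdef, ← one_div_div c (Real.log B)]
      exact one_div_le_one_div_of_le hγ0 hγle
    have hκne : κ ≠ κs := by
      intro h
      apply hγne
      rw [← one_div_one_div γ, ← hκdef, h]
    have hR1 : R γ = ff c B κ := hRff γ hγ0
    have hR2 : R (1 / κs) = ff c B κs := by
      rw [hRff (1 / κs) (by positivity), one_div_one_div]
    rw [hR1, hR2]
    rcases lt_or_gt_of_ne hκne with h | h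
    · exact hmono ⟨hκge, h.le⟩ ⟨hκ₁κs.le, le_refl κs⟩ h
    · exact hanti (self_mem_Ici) (mem_Ici.mpr h.le) h
end

section
/- Let n ≥ 1 be an integer, 0 < p̂ < q̂, σ² > 0 and z ≥ 0; set p := p̂/σ² and q := q̂/σ², and let f_U(u) := (e^{−(u−σ²)/q̂} − e^{−(u−σ²)/p̂})/(q̂ − p̂) for u ≥ σ². Then ∫_{σ²}^∞ f_U(u) · u^{−n} e^{−z/u} du = σ^{−2n} ( (q/(q−p)) Φ(q, z/σ²) − (p/(q−p)) Φ(p, z/σ²) ), where Φ(x, w) := ∫_0^∞ e^{−v} (1 + x v)^{−n} e^{−w/(1+xv)} dv. -/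
open MeasureTheory Real Set

/-- `Phi n x w = ∫_0^∞ e^{−v} (1 + x v)^{−n} e^{−w/(1+xv)} dv`. -/
noncomputable def Phi (n : ℕ) (x w : ℝ) : ℝ :=
  ∫ v in Set.Ioi (0 : ℝ),
    Real.exp (-v) * (1 + x * v) ^ (-(n : ℤ)) * Real.exp (-w / (1 + x * v))

lemma aux_cont (n : ℕ) (σ2 z a : ℝ) (hσ : 0 < σ2) :
    ContinuousOn (fun u : ℝ => Real.exp (-(u - σ2) / a) *
      (u ^ (-(n : ℤ)) * Real.exp (-z / u))) (Ioi σ2) := by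
  have h0 : ∀ u ∈ Ioi σ2, u ≠ 0 := fun u hu => by have := hσ.trans hu; positivity
  apply ContinuousOn.mul
  · exact (Real.continuous_exp.comp (by continuity)).continuousOn
  apply ContinuousOn.mul
  · exact fun u hu => ((continuousAt_zpow₀ u _ (Or.inl (h0 u hu)))).continuousWithinAt
  · exact Real.continuous_exp.comp_continuousOn
      (ContinuousOn.div continuousOn_const continuousOn_id h0 :
        ContinuousOn (fun u : ℝ => -z / u) (Ioi σ2))

lemma aux_integrable (n : ℕ) (σ2 z a : ℝ) (hσ : 0 < σ2) (hz : 0 ≤ z) (ha : 0 < a) :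
    IntegrableOn (fun u : ℝ => Real.exp (-(u - σ2) / a) *
      (u ^ (-(n : ℤ)) * Real.exp (-z / u))) (Ioi σ2) := by
  have hmeas : AEStronglyMeasurable (fun u : ℝ => Real.exp (-(u - σ2) / a) *
      (u ^ (-(n : ℤ)) * Real.exp (-z / u))) (volume.restrict (Ioi σ2)) :=
    (aux_cont n σ2 z a hσ).aestronglyMeasurable measurableSet_Ioi
  have hbound : IntegrableOn
      (fun u : ℝ => (Real.exp (σ2 / a) * σ2 ^ (-(n : ℤ))) * Real.exp (-(1/a) * u))
      (Ioi σ2) := (exp_neg_integrableOn_Ioi σ2 (by positivity)).const_mul _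
  refine hbound.mono' hmeas ?_
  filter_upwards [ae_restrict_mem measurableSet_Ioi] with u hu
  have huσ : σ2 < u := hu
  have hu0 : 0 < u := hσ.trans huσ
  have h1 : Real.exp (-(u - σ2) / a) = Real.exp (σ2 / a) * Real.exp (-(1/a) * u) := by
    rw [← Real.exp_add]; ring_nf
  have h2 : u ^ (-(n : ℤ)) ≤ σ2 ^ (-(n : ℤ)) := by
    rw [zpow_neg, zpow_neg, zpow_natCast, zpow_natCast]
    gcongr
  have h3 : Real.exp (-z / u) ≤ 1 := by
    rw [Real.exp_le_one_iff]; apply div_nonpos_of_nonpos_of_nonneg <;> [linarith; linarith]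
  have h4 : (0:ℝ) < u ^ (-(n : ℤ)) := by positivity
  rw [Real.norm_eq_abs, abs_of_nonneg (by positivity), h1]
  calc Real.exp (σ2 / a) * Real.exp (-(1/a) * u) * (u ^ (-(n : ℤ)) * Real.exp (-z / u))
      ≤ Real.exp (σ2 / a) * Real.exp (-(1/a) * u) * (σ2 ^ (-(n : ℤ)) * 1) := by
        apply mul_le_mul_of_nonneg_left (mul_le_mul h2 h3 (Real.exp_pos _).le (by positivity))
          (by positivity)
    _ = Real.exp (σ2 / a) * σ2 ^ (-(n : ℤ)) * Real.exp (-(1/a) * u) := by ring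

lemma aux_shift (F : ℝ → ℝ) (σ2 : ℝ) :
    ∫ y in Ioi (0:ℝ), F (y + σ2) = ∫ u in Ioi σ2, F u := by
  have h := MeasurePreserving.setIntegral_preimage_emb
    (measurePreserving_add_right volume σ2)
    (MeasurableEquiv.addRight σ2).measurableEmbedding F (Ioi σ2)
  simpa using h

lemma aux_subst (n : ℕ) (σ2 z a : ℝ) (hσ : 0 < σ2) (ha : 0 < a) :
    Phi n (a / σ2) (z / σ2) =
      a⁻¹ * (σ2 ^ (n : ℤ) *
        ∫ u in Ioi σ2, Real.exp (-(u - σ2) / a) * (u ^ (-(n : ℤ)) * Real.exp (-z / u))) := by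
  set F : ℝ → ℝ := fun u => Real.exp (-(u - σ2) / a) * (u ^ (-(n : ℤ)) * Real.exp (-z / u))
    with hF
  have step1 : Phi n (a / σ2) (z / σ2)
      = ∫ v in Ioi (0:ℝ), (fun y => σ2 ^ (n : ℤ) * F (y + σ2)) (a * v) := by
    rw [Phi]
    refine setIntegral_congr_fun measurableSet_Ioi (fun v hv => ?_)
    have hv0 : 0 < v := hv
    have hpos : 0 < a * v + σ2 := by positivity
    have e1 : 1 + a / σ2 * v = (a * v + σ2) / σ2 := by field_simp; ring
    have e2 : -(a * v + σ2 - σ2) / a = -v := by field_simp; ring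
    have e3 : ((a * v + σ2) / σ2) ^ (-(n : ℤ))
        = σ2 ^ (n : ℤ) * (a * v + σ2) ^ (-(n : ℤ)) := by
      rw [div_zpow, zpow_neg, zpow_neg, div_inv_eq_mul, mul_comm]
    have e4 : -(z / σ2) / ((a * v + σ2) / σ2) = -z / (a * v + σ2) := by
      field_simp
    simp only [hF, e1, e2, e3, e4]
    ring
  rw [step1, integral_comp_mul_left_Ioi (fun y => σ2 ^ (n : ℤ) * F (y + σ2)) 0 ha,
    mul_zero, smul_eq_mul, integral_const_mul, aux_shift]

theorem stmt_8 (n : ℕ) (hn : 1 ≤ n) (ph qh σ2 z : ℝ) (hph : 0 < ph) (hpq : ph < qh)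
    (hσ : 0 < σ2) (hz : 0 ≤ z) (p q : ℝ) (hp : p = ph / σ2) (hq : q = qh / σ2)
    (fU : ℝ → ℝ)
    (hfU : ∀ u, σ2 ≤ u →
      fU u = (Real.exp (-(u - σ2) / qh) - Real.exp (-(u - σ2) / ph)) / (qh - ph)) :
    ∫ u in Set.Ici σ2, fU u * (u ^ (-(n : ℤ)) * Real.exp (-z / u)) =
      σ2 ^ (-(n : ℤ)) *
        (q / (q - p) * Phi n q (z / σ2) - p / (q - p) * Phi n p (z / σ2)) := by
  have hqh : 0 < qh := hph.trans hpq
  have Iq := aux_integrable n σ2 z qh hσ hz hqh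
  have Ip := aux_integrable n σ2 z ph hσ hz hph
  rw [MeasureTheory.integral_Ici_eq_integral_Ioi]
  have hL : ∫ u in Ioi σ2, fU u * (u ^ (-(n : ℤ)) * Real.exp (-z / u))
      = (qh - ph)⁻¹ *
        ((∫ u in Ioi σ2, Real.exp (-(u - σ2) / qh) * (u ^ (-(n : ℤ)) * Real.exp (-z / u))) -
          ∫ u in Ioi σ2, Real.exp (-(u - σ2) / ph) * (u ^ (-(n : ℤ)) * Real.exp (-z / u))) := by
    rw [← integral_sub Iq Ip, ← integral_const_mul]
    refine setIntegral_congr_fun measurableSet_Ioi (fun u hu => ?_)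
    rw [hfU u (le_of_lt hu)]
    ring
  rw [hL, hp, hq, aux_subst n σ2 z qh hσ hqh, aux_subst n σ2 z ph hσ hph]
  have h1 : qh - ph ≠ 0 := sub_ne_zero.mpr hpq.ne'
  have h2 : (σ2 : ℝ) ^ (n : ℤ) ≠ 0 := by positivity
  have h3 : qh / σ2 - ph / σ2 = (qh - ph) / σ2 := by ring
  rw [zpow_neg, h3]
  field_simp
end

section
/- Let G, E, F > 0 and define h(τ) := (1 − τ) ln(1 + Gτ/(Eτ + F)) for τ ∈ (0,1). Then h is twice differentiable on (0,1) with h″(τ) = −G·F·(2E²τ + F(G + 2F + Gτ) + 2E(F + Gτ + Fτ)) / ((Eτ + F)²((G + E)τ + F)²), which is strictly negative for all τ ∈ (0,1); hence h is strictly concave on (0,1). -/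
open Real Set

theorem stmt_13 (G E F : ℝ) (hG : 0 < G) (hE : 0 < E) (hF : 0 < F)
    (h : ℝ → ℝ)
    (hh : ∀ τ : ℝ, h τ = (1 - τ) * Real.log (1 + G * τ / (E * τ + F))) :
    (∀ τ ∈ Set.Ioo (0 : ℝ) 1,
      DifferentiableAt ℝ h τ ∧ DifferentiableAt ℝ (deriv h) τ ∧
      deriv (deriv h) τ =
        -(G * F * (2 * E ^ 2 * τ + F * (G + 2 * F + G * τ) +
            2 * E * (F + G * τ + F * τ))) /
          ((E * τ + F) ^ 2 * ((G + E) * τ + F) ^ 2) ∧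
      deriv (deriv h) τ < 0) ∧
    StrictConcaveOn ℝ (Set.Ioo (0 : ℝ) 1) h := by
  have hO : IsOpen (Set.Ioo (0:ℝ) 1) := isOpen_Ioo
  have hBpos : ∀ τ ∈ Set.Ioo (0:ℝ) 1, 0 < E * τ + F := by
    intro τ hτ; nlinarith [hτ.1]
  have hApos : ∀ τ ∈ Set.Ioo (0:ℝ) 1, 0 < (G + E) * τ + F := by
    intro τ hτ; nlinarith [hτ.1]
  set h1 : ℝ → ℝ :=
    fun τ => (1 - τ) * (Real.log ((G + E) * τ + F) - Real.log (E * τ + F)) with hh1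
  have heq : ∀ τ ∈ Set.Ioo (0:ℝ) 1, h τ = h1 τ := by
    intro τ hτ
    have hB := hBpos τ hτ
    have hA := hApos τ hτ
    rw [hh]
    have e : 1 + G * τ / (E * τ + F) = ((G + E) * τ + F) / (E * τ + F) := by
      rw [eq_div_iff hB.ne', add_mul, div_mul_cancel₀ _ hB.ne']; ring
    rw [e, Real.log_div hA.ne' hB.ne']
  set h1' : ℝ → ℝ := fun τ =>
    (-1) * (Real.log ((G + E) * τ + F) - Real.log (E * τ + F)) +
      (1 - τ) * ((G + E) / ((G + E) * τ + F) - E / (E * τ + F)) with hd1def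
  set h2 : ℝ → ℝ := fun τ =>
    (-2) * ((G + E) / ((G + E) * τ + F) - E / (E * τ + F)) +
      (1 - τ) * (E ^ 2 / (E * τ + F) ^ 2 - (G + E) ^ 2 / ((G + E) * τ + F) ^ 2)
    with hd2def
  have hd1 : ∀ τ ∈ Set.Ioo (0:ℝ) 1, HasDerivAt h1 (h1' τ) τ := by
    intro τ hτ
    have hB := (hBpos τ hτ).ne'
    have hA := (hApos τ hτ).ne'
    have dA : HasDerivAt (fun x : ℝ => (G + E) * x + F) (G + E) τ := by
      simpa using ((hasDerivAt_id τ).const_mul (G + E)).add_const F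
    have dB : HasDerivAt (fun x : ℝ => E * x + F) E τ := by
      simpa using ((hasDerivAt_id τ).const_mul E).add_const F
    have d1 : HasDerivAt (fun x : ℝ => 1 - x) (-1) τ := by
      simpa using (hasDerivAt_id τ).const_sub 1
    exact d1.mul ((dA.log hA).sub (dB.log hB))
  have hd2 : ∀ τ ∈ Set.Ioo (0:ℝ) 1, HasDerivAt h1' (h2 τ) τ := by
    intro τ hτ
    have hB := (hBpos τ hτ).ne'
    have hA := (hApos τ hτ).ne'
    have dA : HasDerivAt (fun x : ℝ => (G + E) * x + F) (G + E) τ := by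
      simpa using ((hasDerivAt_id τ).const_mul (G + E)).add_const F
    have dB : HasDerivAt (fun x : ℝ => E * x + F) E τ := by
      simpa using ((hasDerivAt_id τ).const_mul E).add_const F
    have d1 : HasDerivAt (fun x : ℝ => 1 - x) (-1) τ := by
      simpa using (hasDerivAt_id τ).const_sub 1
    have dqA : HasDerivAt (fun x : ℝ => (G + E) / ((G + E) * x + F))
        ((0 * ((G + E) * τ + F) - (G + E) * (G + E)) / ((G + E) * τ + F) ^ 2) τ :=
      (hasDerivAt_const τ (G + E)).div dA hA
    have dqB : HasDerivAt (fun x : ℝ => E / (E * x + F))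
        ((0 * (E * τ + F) - E * E) / (E * τ + F) ^ 2) τ :=
      (hasDerivAt_const τ E).div dB hB
    have dpart1 := ((dA.log hA).sub (dB.log hB)).const_mul (-1 : ℝ)
    have dpart2 := d1.mul (dqA.sub dqB)
    have := dpart1.add dpart2
    refine this.congr_deriv ?_
    have hA' := (hApos τ hτ).ne'
    have hB' := (hBpos τ hτ).ne'
    simp only [Pi.sub_apply, hd2def]
    field_simp [hd2def]
    ring
  have hmem : ∀ τ ∈ Set.Ioo (0:ℝ) 1, Set.Ioo (0:ℝ) 1 ∈ nhds τ :=
    fun τ hτ => hO.mem_nhds hτ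
  have hev : ∀ τ ∈ Set.Ioo (0:ℝ) 1, h =ᶠ[nhds τ] h1 :=
    fun τ hτ => Filter.eventuallyEq_of_mem (hmem τ hτ) heq
  have hdh : ∀ τ ∈ Set.Ioo (0:ℝ) 1, HasDerivAt h (h1' τ) τ :=
    fun τ hτ => (hd1 τ hτ).congr_of_eventuallyEq (hev τ hτ)
  have hderiv : ∀ τ ∈ Set.Ioo (0:ℝ) 1, deriv h τ = h1' τ :=
    fun τ hτ => (hdh τ hτ).deriv
  have hev' : ∀ τ ∈ Set.Ioo (0:ℝ) 1, deriv h =ᶠ[nhds τ] h1' :=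
    fun τ hτ => Filter.eventuallyEq_of_mem (hmem τ hτ) hderiv
  have hdd : ∀ τ ∈ Set.Ioo (0:ℝ) 1, HasDerivAt (deriv h) (h2 τ) τ :=
    fun τ hτ => (hd2 τ hτ).congr_of_eventuallyEq (hev' τ hτ)
  have key : ∀ τ ∈ Set.Ioo (0 : ℝ) 1,
      DifferentiableAt ℝ h τ ∧ DifferentiableAt ℝ (deriv h) τ ∧
      deriv (deriv h) τ =
        -(G * F * (2 * E ^ 2 * τ + F * (G + 2 * F + G * τ) +
            2 * E * (F + G * τ + F * τ))) /
          ((E * τ + F) ^ 2 * ((G + E) * τ + F) ^ 2) ∧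
      deriv (deriv h) τ < 0 := by
    intro τ hτ
    have hA := (hApos τ hτ)
    have hB := (hBpos τ hτ)
    have hval : deriv (deriv h) τ =
        -(G * F * (2 * E ^ 2 * τ + F * (G + 2 * F + G * τ) +
            2 * E * (F + G * τ + F * τ))) /
          ((E * τ + F) ^ 2 * ((G + E) * τ + F) ^ 2) := by
      rw [(hdd τ hτ).deriv, hd2def]
      field_simp
      ring
    refine ⟨(hdh τ hτ).differentiableAt, (hdd τ hτ).differentiableAt, hval, ?_⟩
    rw [hval, neg_div]
    have hnum : 0 < G * F * (2 * E ^ 2 * τ + F * (G + 2 * F + G * τ) +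
        2 * E * (F + G * τ + F * τ)) := by
      obtain ⟨ht0, ht1⟩ := hτ
      positivity
    have hden : 0 < (E * τ + F) ^ 2 * ((G + E) * τ + F) ^ 2 :=
      mul_pos (pow_pos hB 2) (pow_pos hA 2)
    exact neg_lt_zero.mpr (div_pos hnum hden)
  refine ⟨key, strictConcaveOn_of_deriv2_neg (convex_Ioo 0 1)
    (fun τ hτ => ((key τ hτ).1).continuousAt.continuousWithinAt) ?_⟩
  intro x hx
  rw [hO.interior_eq] at hx
  exact (key x hx).2.2.2
end
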